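/- For m ≥ 3, the Nimber of the Toggle position on the generalized Petersen graph P(m,1) in which every vertex has weight 1 equals mex{ G(H_{m+1}) }; equivalently, it equals 1 if G(H_{m+1}) = 0 and equals 0 if G(H_{m+1}) ≥ 1, where G(H_{m+1}) is the Nimber of the Toggle position H_{m+1}. -/

import Mathlib

namespace Toggle

variable {V : Type*} [Fintype V] [DecidableEq V]

/-- The closed neighborhood `N[v]` of a vertex as a `Finset`. -/
def closedNbhd (G : SimpleGraph V) [DecidableRel G.Adj] (v : V) : Finset V :=
  insert v (G.neighborFinset v)

/-- The result of a Toggle move at `v`: flip the weight of every vertex in `N[v]`. -/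
def move (G : SimpleGraph V) [DecidableRel G.Adj] (ω : V → Bool) (v : V) : V → Bool :=
  fun u => if u ∈ closedNbhd G v then !(ω u) else ω u

/-- Total weight of a position. -/
def weight (ω : V → Bool) : ℕ := (Finset.univ.filter (fun u => ω u = true)).card

/-- Weight of a position over the closed neighborhood of `v`. -/
def nbhdWeight (G : SimpleGraph V) [DecidableRel G.Adj] (ω : V → Bool) (v : V) : ℕ :=
  ((closedNbhd G v).filter (fun u => ω u = true)).card

/-- A Toggle move at `v` is legal iff `ω v = 1` and the move strictly decreases the
weight over `N[v]`. -/
def IsLegal (G : SimpleGraph V) [DecidableRel G.Adj] (ω : V → Bool) (v : V) : Prop :=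
  ω v = true ∧ nbhdWeight G (move G ω v) v < nbhdWeight G ω v

instance (G : SimpleGraph V) [DecidableRel G.Adj] (ω : V → Bool) (v : V) :
    Decidable (IsLegal G ω v) :=
  inferInstanceAs (Decidable (ω v = true ∧ nbhdWeight G (move G ω v) v < nbhdWeight G ω v))

theorem weight_move_lt (G : SimpleGraph V) [DecidableRel G.Adj] {ω : V → Bool} {v : V}
    (h : IsLegal G ω v) : weight (move G ω v) < weight ω := by
  have key : ∀ ψ : V → Bool,
      weight ψ = ((closedNbhd G v).filter (fun u => ψ u = true)).card
        + ((Finset.univ \ closedNbhd G v).filter (fun u => ψ u = true)).card := by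
    intro ψ
    rw [weight, ← Finset.card_union_of_disjoint
      (Finset.disjoint_filter_filter Finset.disjoint_sdiff)]
    congr 1
    ext u
    simp only [Finset.mem_filter, Finset.mem_union, Finset.mem_sdiff, Finset.mem_univ,
      true_and]
    tauto
  have hout : ((Finset.univ \ closedNbhd G v).filter (fun u => move G ω v u = true))
      = ((Finset.univ \ closedNbhd G v).filter (fun u => ω u = true)) := by
    apply Finset.filter_congr
    intro u hu
    rw [Finset.mem_sdiff] at hu
    simp [move, hu.2]
  have h2 := h.2
  rw [key (move G ω v), key ω, hout]
  unfold nbhdWeight at h2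
  omega

/-- Minimal excludant of a finite set of naturals. -/
noncomputable def mex (s : Finset ℕ) : ℕ := sInf {n : ℕ | n ∉ s}

/-- The Nimber (Grundy value) of a Toggle position. -/
noncomputable def grundy (G : SimpleGraph V) [DecidableRel G.Adj] (ω : V → Bool) : ℕ :=
  mex ((Finset.univ.filter (fun v => IsLegal G ω v)).attach.image
    (fun v => grundy G (move G ω v.1)))
termination_by weight ω
decreasing_by
  have hv := v.2
  rw [Finset.mem_filter] at hv
  exact weight_move_lt G hv.2

/-- One legal Toggle move transforms `ω` into `ω'`. -/
def Step (G : SimpleGraph V) [DecidableRel G.Adj] (ω ω' : V → Bool) : Prop :=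
  ∃ v, IsLegal G ω v ∧ ω' = move G ω v

/-- `ω'` is reachable from `ω` by a (possibly empty) sequence of legal moves. -/
def Reach (G : SimpleGraph V) [DecidableRel G.Adj] (ω ω' : V → Bool) : Prop :=
  Relation.ReflTransGen (Step G) ω ω'

/-- `v` is terminally unplayable at `ω`: unplayable at `ω` and at every position
reachable from `ω`. -/
def TerminallyUnplayable (G : SimpleGraph V) [DecidableRel G.Adj] (ω : V → Bool) (v : V) :
    Prop :=
  ∀ ω', Reach G ω ω' → ¬ IsLegal G ω' v

/-- `v` is penultimately unplayable for the initial position `ω₀`: at every position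
reachable from `ω₀`, after any legal move at a vertex `u ∈ N[v]`, the vertex `v` is
terminally unplayable. -/
def PenultimatelyUnplayableAt (G : SimpleGraph V) [DecidableRel G.Adj] (ω₀ : V → Bool)
    (v : V) : Prop :=
  ∀ ω', Reach G ω₀ ω' → ∀ u ∈ closedNbhd G v, IsLegal G ω' u →
    TerminallyUnplayable G (move G ω' u) v

/-- The position `ω₀` is penultimately unplayable if every vertex is. -/
def PenultimatelyUnplayable (G : SimpleGraph V) [DecidableRel G.Adj] (ω₀ : V → Bool) :
    Prop :=
  ∀ v, PenultimatelyUnplayableAt G ω₀ v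

/-- The path graph on `Fin n`, vertices `0, 1, …, n-1` in order. -/
def pathGraph (n : ℕ) : SimpleGraph (Fin n) :=
  SimpleGraph.fromRel (fun a b => (a : ℕ) + 1 = (b : ℕ))

instance (n : ℕ) : DecidableRel (pathGraph n).Adj := fun a b =>
  decidable_of_iff _ (SimpleGraph.fromRel_adj _ a b).symm

/-- The 2×m grid graph `L_{2,m}` (0-indexed rows and columns). -/
def gridGraph (m : ℕ) : SimpleGraph (Fin 2 × Fin m) :=
  SimpleGraph.fromRel (fun a b =>
    (a.1 = b.1 ∧ (a.2 : ℕ) + 1 = (b.2 : ℕ)) ∨ (a.2 = b.2 ∧ (a.1 : ℕ) + 1 = (b.1 : ℕ)))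

instance (m : ℕ) : DecidableRel (gridGraph m).Adj := fun a b =>
  decidable_of_iff _ (SimpleGraph.fromRel_adj _ a b).symm

/-- The generalized Petersen graph `P(m,k)`; the vertex `(0, i)` is the outer vertex
`u_i` and `(1, i)` is the inner vertex `w_i` (0-indexed). -/
def petersen (m k : ℕ) : SimpleGraph (Fin 2 × Fin m) :=
  SimpleGraph.fromRel (fun a b =>
    (a.1 = 0 ∧ b.1 = 0 ∧ ((a.2 : ℕ) + 1) % m = (b.2 : ℕ)) ∨
    (a.1 = 0 ∧ b.1 = 1 ∧ a.2 = b.2) ∨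
    (a.1 = 1 ∧ b.1 = 1 ∧ ((a.2 : ℕ) + k) % m = (b.2 : ℕ)))

instance (m k : ℕ) : DecidableRel (petersen m k).Adj := fun a b =>
  decidable_of_iff _ (SimpleGraph.fromRel_adj _ a b).symm

/-- The position on `P(m,k)` where every outer vertex has weight 1 and every inner
vertex has weight 0. -/
def P01 (m : ℕ) : Fin 2 × Fin m → Bool := fun p => decide (p.1 = 0)

/-- The position on `P(m,k)` where every inner vertex has weight 1 and every outer
vertex has weight 0. -/
def P10 (m : ℕ) : Fin 2 × Fin m → Bool := fun p => decide (p.1 = 1)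

/-- The position where every vertex has weight 1. -/
def P11 (m : ℕ) : Fin 2 × Fin m → Bool := fun _ => true

/-- The Toggle position `H_m` on `L_{2,m}` (columns 0-indexed): for `m ≠ 3`, weight 0
exactly at `(0,0), (0,m-1), (1,0), (1,1), (1,m-2), (1,m-1)`; for `m = 3`, weight 0
exactly at `(0,0), (0,2), (1,0), (1,2)`. -/
def Hpos (m : ℕ) : Fin 2 × Fin m → Bool := fun p =>
  if m = 3 then !(decide ((p.2 : ℕ) = 0 ∨ (p.2 : ℕ) = 2))
  else !(decide ((p.1 = 0 ∧ ((p.2 : ℕ) = 0 ∨ (p.2 : ℕ) = m - 1)) ∨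
                 (p.1 = 1 ∧ ((p.2 : ℕ) ≤ 1 ∨ m - 2 ≤ (p.2 : ℕ)))))

/-- The Toggle position `D_m` on `L_{2,m}` (columns 0-indexed): weight 0 exactly at
`(0,0), (0,m-2), (0,m-1), (1,0), (1,1), (1,m-1)`. -/
def Dpos (m : ℕ) : Fin 2 × Fin m → Bool := fun p =>
  !(decide ((p.1 = 0 ∧ ((p.2 : ℕ) = 0 ∨ m - 2 ≤ (p.2 : ℕ))) ∨
            (p.1 = 1 ∧ ((p.2 : ℕ) ≤ 1 ∨ (p.2 : ℕ) = m - 1))))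

/-- The Nimber of the position `H_m`. -/
noncomputable def GH (m : ℕ) : ℕ := grundy (gridGraph m) (Hpos m)

/-- The Nimber of the position `D_m`. -/
noncomputable def GD (m : ℕ) : ℕ := grundy (gridGraph m) (Dpos m)

/-- The cycle graph `C_m` on `Fin m`. -/
def cycleGraph (m : ℕ) : SimpleGraph (Fin m) :=
  SimpleGraph.fromRel (fun a b => ((a : ℕ) + 1) % m = (b : ℕ))

open scoped Classical in
/-- The Nimber of a position of Jacob's Ladder on `C_m`: a position is the `Finset` of
not-yet-removed vertices, and a move at a remaining vertex `v` removes all remaining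
vertices at distance at most 2 from `v` in `C_m`. -/
noncomputable def jlGrundy (m : ℕ) (S : Finset (Fin m)) : ℕ :=
  mex (S.attach.image (fun v =>
    jlGrundy m (S.filter (fun u => 2 < (cycleGraph m).dist v.1 u))))
termination_by S.card
decreasing_by
  apply Finset.card_lt_card
  rw [Finset.ssubset_iff_of_subset (Finset.filter_subset _ _)]
  exact ⟨v.1, v.2, by simp [SimpleGraph.dist_self]⟩

end Toggle


namespace Toggle

section Generic

variable {V : Type*} [Fintype V] [DecidableEq V]

lemma mem_closedNbhd {G : SimpleGraph V} [DecidableRel G.Adj] {v u : V} :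
    u ∈ closedNbhd G v ↔ u = v ∨ G.Adj v u := by
  simp [closedNbhd]

lemma nbhdWeight_move_self (G : SimpleGraph V) [DecidableRel G.Adj] (ω : V → Bool) (v : V) :
    nbhdWeight G (move G ω v) v = (closedNbhd G v).card - nbhdWeight G ω v := by
  unfold nbhdWeight
  have h1 : (closedNbhd G v).filter (fun u => move G ω v u = true)
      = (closedNbhd G v).filter (fun u => ¬ (ω u = true)) := by
    apply Finset.filter_congr
    intro u hu
    simp [move, hu]
  rw [h1, Finset.filter_not, Finset.card_sdiff_of_subset (Finset.filter_subset _ _)]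

lemma nbhdWeight_le_card (G : SimpleGraph V) [DecidableRel G.Adj] (ω : V → Bool) (v : V) :
    nbhdWeight G ω v ≤ (closedNbhd G v).card :=
  Finset.card_filter_le _ _

lemma isLegal_iff_card (G : SimpleGraph V) [DecidableRel G.Adj] (ω : V → Bool) (v : V) :
    IsLegal G ω v ↔ ω v = true ∧ (closedNbhd G v).card < 2 * nbhdWeight G ω v := by
  have h := nbhdWeight_le_card G ω v
  rw [IsLegal, nbhdWeight_move_self]
  constructor
  · rintro ⟨h1, h2⟩; exact ⟨h1, by omega⟩
  · rintro ⟨h1, h2⟩; exact ⟨h1, by omega⟩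

/-- Key bisimulation lemma: if `R` is a relation between positions on two graphs such
that legal moves correspond on both sides, related positions have equal grundy value. -/
lemma grundy_eq_of_rel {V' : Type*} [Fintype V'] [DecidableEq V']
    (G : SimpleGraph V) [DecidableRel G.Adj] (G' : SimpleGraph V') [DecidableRel G'.Adj]
    (R : (V → Bool) → (V' → Bool) → Prop)
    (hR : ∀ ω ψ, R ω ψ →
      (∀ v, IsLegal G ω v → ∃ v', IsLegal G' ψ v' ∧ R (move G ω v) (move G' ψ v')) ∧
      (∀ v', IsLegal G' ψ v' → ∃ v, IsLegal G ω v ∧ R (move G ω v) (move G' ψ v'))) :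
    ∀ ω ψ, R ω ψ → grundy G ω = grundy G' ψ := by
  have main : ∀ n (ω : V → Bool) (ψ : V' → Bool), weight ω ≤ n → R ω ψ →
      grundy G ω = grundy G' ψ := by
    intro n
    induction n with
    | zero =>
      intro ω ψ hw h
      rw [grundy, grundy]
      congr 1
      apply Finset.ext
      intro x
      simp only [Finset.mem_image, Finset.mem_attach, true_and, Subtype.exists,
        Finset.mem_filter, Finset.mem_univ]
      constructor
      · rintro ⟨v, hv, rfl⟩
        exact absurd (weight_move_lt G (⟨hv.1, hv.2⟩ : IsLegal G ω v)) (by omega)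
      · rintro ⟨v', hv', rfl⟩
        obtain ⟨v, hv, -⟩ := (hR ω ψ h).2 v' ⟨hv'.1, hv'.2⟩
        exact absurd (weight_move_lt G hv) (by omega)
    | succ n ih =>
      intro ω ψ hw h
      rw [grundy, grundy]
      congr 1
      apply Finset.ext
      intro x
      simp only [Finset.mem_image, Finset.mem_attach, true_and, Subtype.exists,
        Finset.mem_filter, Finset.mem_univ]
      constructor
      · rintro ⟨v, hv, rfl⟩
        obtain ⟨v', hv', hR'⟩ := (hR ω ψ h).1 v ⟨hv.1, hv.2⟩
        refine ⟨v', ⟨hv'.1, hv'.2⟩, ?_⟩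
        have := weight_move_lt G (⟨hv.1, hv.2⟩ : IsLegal G ω v)
        exact (ih _ _ (by omega) hR').symm
      · rintro ⟨v', hv', rfl⟩
        obtain ⟨v, hv, hR'⟩ := (hR ω ψ h).2 v' ⟨hv'.1, hv'.2⟩
        refine ⟨v, ⟨hv.1, hv.2⟩, ?_⟩
        have := weight_move_lt G hv
        exact ih _ _ (by omega) hR'
  exact fun ω ψ h => main (weight ω) ω ψ le_rfl h

lemma mex_singleton (x : ℕ) : mex {x} = if x = 0 then 1 else 0 := by
  unfold mex
  split_ifs with h
  · subst h
    have h1 : (1 : ℕ) ∈ {n : ℕ | n ∉ ({0} : Finset ℕ)} := by simp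
    apply le_antisymm (Nat.sInf_le h1)
    rcases Nat.eq_zero_or_pos (sInf {n : ℕ | n ∉ ({0} : Finset ℕ)}) with h2 | h2
    · have := Nat.sInf_mem ⟨1, h1⟩
      rw [h2] at this
      simp at this
    · exact h2
  · apply Nat.sInf_eq_zero.mpr
    left
    simpa using fun he => h he.symm

/-- from the all-ones position, every move is legal. -/
lemma isLegal_allOnes (G : SimpleGraph V) [DecidableRel G.Adj] (v : V) :
    IsLegal G (fun _ => true) v := by
  rw [isLegal_iff_card]
  refine ⟨rfl, ?_⟩
  have h1 : nbhdWeight G (fun _ => true) v = (closedNbhd G v).card := by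
    unfold nbhdWeight
    congr 1
    simp
  have h2 : 0 < (closedNbhd G v).card := by
    refine Finset.card_pos.mpr ⟨v, ?_⟩
    simp [closedNbhd]
  omega

end Generic

end Toggle


namespace Toggle

section Graphs

variable {m : ℕ} [NeZero m]

lemma val_add_one (hm : 2 ≤ m) (i : Fin m) :
    ((i + 1 : Fin m) : ℕ) = if (i : ℕ) = m - 1 then 0 else (i : ℕ) + 1 := by
  have h1 : (1 : Fin m).val = 1 := by
    rw [Fin.val_one']
    exact Nat.mod_eq_of_lt hm
  rw [Fin.val_add, h1]
  have hi := i.isLt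
  split_ifs with h
  · have h2 : (i : ℕ) + 1 = m := by omega
    rw [h2, Nat.mod_self]
  · exact Nat.mod_eq_of_lt (by omega)

lemma val_sub_one (hm : 2 ≤ m) (i : Fin m) :
    ((i - 1 : Fin m) : ℕ) = if (i : ℕ) = 0 then m - 1 else (i : ℕ) - 1 := by
  have h := val_add_one hm (i - 1)
  rw [sub_add_cancel] at h
  have hj := (i - 1).isLt
  have hi := i.isLt
  split_ifs at h ⊢ <;> omega

lemma fin_add_one_eq (hm : 2 ≤ m) (i j : Fin m) :
    ((i : ℕ) + 1) % m = (j : ℕ) ↔ i + 1 = j := by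
  have hval : ((i + 1 : Fin m) : ℕ) = ((i : ℕ) + 1) % m := by
    rw [Fin.add_def, Fin.val_one', Nat.mod_eq_of_lt hm]
  constructor
  · intro h
    apply Fin.ext
    rw [hval, h]
  · intro h
    rw [← hval, h]

lemma petersen_adj (hm : 3 ≤ m) (x y : Fin 2 × Fin m) :
    (petersen m 1).Adj x y ↔ x ≠ y ∧
      ((x.1 = y.1 ∧ (x.2 + 1 = y.2 ∨ y.2 + 1 = x.2)) ∨ (x.2 = y.2 ∧ y.1 = x.1 + 1)) := by
  obtain ⟨x1, x2⟩ := x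
  obtain ⟨y1, y2⟩ := y
  simp only [petersen, SimpleGraph.fromRel_adj, fin_add_one_eq (show 2 ≤ m by omega)]
  constructor
  · rintro ⟨hne, h⟩
    refine ⟨hne, ?_⟩
    fin_cases x1 <;> fin_cases y1 <;> simp_all <;> tauto
  · rintro ⟨hne, h⟩
    refine ⟨hne, ?_⟩
    fin_cases x1 <;> fin_cases y1 <;> simp_all <;> tauto

lemma grid_adj {n : ℕ} (x y : Fin 2 × Fin n) :
    (gridGraph n).Adj x y ↔ x ≠ y ∧
      ((x.1 = y.1 ∧ ((x.2 : ℕ) + 1 = (y.2 : ℕ) ∨ (y.2 : ℕ) + 1 = (x.2 : ℕ))) ∨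
        (x.2 = y.2 ∧ y.1 = x.1 + 1)) := by
  obtain ⟨x1, x2⟩ := x
  obtain ⟨y1, y2⟩ := y
  simp only [gridGraph, SimpleGraph.fromRel_adj]
  constructor
  · rintro ⟨hne, h⟩
    refine ⟨hne, ?_⟩
    fin_cases x1 <;> fin_cases y1 <;> simp_all <;> omega
  · rintro ⟨hne, h⟩
    refine ⟨hne, ?_⟩
    fin_cases x1 <;> fin_cases y1 <;> simp_all <;> omega

lemma row_succ_ne (a : Fin 2) : a + 1 ≠ a := by
  fin_cases a <;> decide

lemma nbr_distinct (hm : 3 ≤ m) (i : Fin m) :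
    i + 1 ≠ i ∧ i - 1 ≠ i ∧ i + 1 ≠ i - 1 := by
  have hi := i.isLt
  have h2 : 2 ≤ m := by omega
  refine ⟨?_, ?_, ?_⟩ <;>
    · simp only [ne_eq, Fin.ext_iff, val_add_one h2, val_sub_one h2]
      split_ifs <;> omega

lemma petersen_closedNbhd (hm : 3 ≤ m) (a : Fin 2) (i : Fin m) :
    closedNbhd (petersen m 1) (a, i) = {(a, i), (a, i + 1), (a, i - 1), (a + 1, i)} := by
  have hd := nbr_distinct hm i
  ext ⟨b, j⟩
  rw [mem_closedNbhd, petersen_adj hm]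
  simp only [Finset.mem_insert, Finset.mem_singleton, Prod.mk.injEq, ne_eq, Prod.ext_iff]
  constructor
  · rintro (⟨h1, h2⟩ | ⟨hne, (⟨rfl, (h | h)⟩ | ⟨rfl, rfl⟩)⟩)
    · exact Or.inl ⟨h1, h2⟩
    · exact Or.inr (Or.inl ⟨rfl, h.symm⟩)
    · refine Or.inr (Or.inr (Or.inl ⟨rfl, ?_⟩))
      rw [← h]
      simp
    · exact Or.inr (Or.inr (Or.inr ⟨rfl, rfl⟩))
  · rintro (⟨rfl, rfl⟩ | ⟨rfl, rfl⟩ | ⟨rfl, rfl⟩ | ⟨rfl, rfl⟩)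
    · exact Or.inl ⟨rfl, rfl⟩
    · refine Or.inr ⟨?_, Or.inl ⟨rfl, Or.inl rfl⟩⟩
      rintro ⟨-, h⟩
      exact hd.1 h.symm
    · refine Or.inr ⟨?_, Or.inl ⟨rfl, Or.inr (by simp)⟩⟩
      rintro ⟨-, h⟩
      exact hd.2.1 h.symm
    · refine Or.inr ⟨?_, Or.inr ⟨rfl, rfl⟩⟩
      rintro ⟨h, -⟩
      exact row_succ_ne a h.symm

lemma grid_closedNbhd {n : ℕ} (a : Fin 2) (j : Fin n) (h1 : 1 ≤ (j : ℕ))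
    (h2 : (j : ℕ) + 1 < n) :
    closedNbhd (gridGraph n) (a, j) =
      {(a, j), (a, ⟨(j : ℕ) + 1, h2⟩), (a, ⟨(j : ℕ) - 1, by omega⟩), (a + 1, j)} := by
  ext ⟨b, j'⟩
  rw [mem_closedNbhd, grid_adj]
  have ha := a.isLt
  have hb := b.isLt
  have hj' := j'.isLt
  simp only [Finset.mem_insert, Finset.mem_singleton, Prod.ext_iff, ne_eq, Fin.ext_iff,
    val_add_one (le_refl 2)]
  split_ifs <;> omega

end Graphs

end Toggle


namespace Toggle

section Core

variable (m : ℕ)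

/-- membership of `(a,i)` in the set of played vertices. -/
def mem1 (S : Finset (Fin 2 × ℕ)) (a : Fin 2) (i : ℕ) : Bool := decide ((a, i) ∈ S)

/-- column `i` is occupied. -/
def occ1 (S : Finset (Fin 2 × ℕ)) (i : ℕ) : Bool := mem1 S 0 i || mem1 S 1 i

/-- whether vertex `(a,i)` has been toggled by the moves in `S`. -/
def tog (S : Finset (Fin 2 × ℕ)) (a : Fin 2) (i : ℕ) : Bool :=
  (mem1 S a (i - 1)).xor ((mem1 S a (i + 1)).xor (occ1 S i))

/-- the weight of `(a,i)` in the starting position (columns `1..m-1`). -/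
def Qv (a : Fin 2) (i : ℕ) : Bool := !decide (a = 1 ∧ (i = 1 ∨ i = m - 1))

/-- the weight of `(a,i)` after the moves in `S` (columns `1..m-1`). -/
def pv (S : Finset (Fin 2 × ℕ)) (a : Fin 2) (i : ℕ) : Bool := (Qv m a i).xor (tog S a i)

/-- `S` is a valid set of played vertices: all in columns `2..m-2`, pairwise column
distance at least 2. -/
def Sok (S : Finset (Fin 2 × ℕ)) : Prop :=
  (∀ p ∈ S, 2 ≤ p.2 ∧ p.2 + 2 ≤ m) ∧
  ∀ p ∈ S, ∀ q ∈ S, p ≠ q → p.2 + 2 ≤ q.2 ∨ q.2 + 2 ≤ p.2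

/-- the weight over the closed neighborhood of `(a,i)`, columns `1..m-1`. -/
def wgt (S : Finset (Fin 2 × ℕ)) (a : Fin 2) (i : ℕ) : ℕ :=
  (pv m S a i).toNat + (if i = 1 then 0 else (pv m S a (i - 1)).toNat)
    + (if i = m - 1 then 0 else (pv m S a (i + 1)).toNat) + (pv m S (a + 1) i).toNat

/-- the corresponding position on the prism `P(m,1)`. -/
def posP (S : Finset (Fin 2 × ℕ)) : Fin 2 × Fin m → Bool :=
  fun p => if (p.2 : ℕ) = 0 then false else pv m S p.1 (p.2 : ℕ)

/-- the corresponding position on the grid `L_{2,m+1}`. -/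
def posG (S : Finset (Fin 2 × ℕ)) : Fin 2 × Fin (m + 1) → Bool :=
  fun p => if (p.2 : ℕ) = 0 ∨ (p.2 : ℕ) = m then false else pv m S p.1 (p.2 : ℕ)

variable {m}

lemma Qv_true {a : Fin 2} {i : ℕ} (h : ¬(a = 1 ∧ (i = 1 ∨ i = m - 1))) :
    Qv m a i = true := by
  unfold Qv
  rw [decide_eq_false h]
  rfl

lemma Qv_false {a : Fin 2} {i : ℕ} (h : a = 1 ∧ (i = 1 ∨ i = m - 1)) :
    Qv m a i = false := by
  unfold Qv
  rw [decide_eq_true h]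
  rfl

lemma mem1_true {S : Finset (Fin 2 × ℕ)} {a : Fin 2} {i : ℕ} (h : (a, i) ∈ S) :
    mem1 S a i = true := decide_eq_true h

lemma mem1_false {S : Finset (Fin 2 × ℕ)} {a : Fin 2} {i : ℕ} (h : (a, i) ∉ S) :
    mem1 S a i = false := decide_eq_false h

lemma mem1_bounds {S : Finset (Fin 2 × ℕ)} (hS : Sok m S) {a : Fin 2} {i : ℕ}
    (h : mem1 S a i = true) : 2 ≤ i ∧ i + 2 ≤ m :=
  hS.1 _ (of_decide_eq_true h)

/-- nothing within column distance 1 of a member, other than the member itself. -/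
lemma mem1_near_false {S : Finset (Fin 2 × ℕ)} (hS : Sok m S) {b : Fin 2} {j : ℕ}
    (hb : (b, j) ∈ S) (c : Fin 2) (k : ℕ) (h1 : j ≤ k + 1) (h2 : k ≤ j + 1)
    (hne : (c, k) ≠ (b, j)) : mem1 S c k = false := by
  apply mem1_false
  intro hmem
  rcases hS.2 _ hmem _ hb hne with h | h <;> simp at h <;> omega

/-- no member in an unoccupied column. -/
lemma mem1_false_of_unocc {S : Finset (Fin 2 × ℕ)} {i : ℕ} (h : occ1 S i = false)
    (c : Fin 2) : mem1 S c i = false := by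
  unfold occ1 at h
  rw [Bool.or_eq_false_iff] at h
  fin_cases c
  · exact h.1
  · exact h.2

lemma occ1_true_of_mem {S : Finset (Fin 2 × ℕ)} {b : Fin 2} {i : ℕ} (h : (b, i) ∈ S) :
    occ1 S i = true := by
  unfold occ1
  have hb : b = 0 ∨ b = 1 := by
    rcases b with ⟨bv, hbv⟩
    interval_cases bv
    · exact Or.inl rfl
    · exact Or.inr rfl
  rcases hb with rfl | rfl
  · rw [mem1_true h]
    rfl
  · rw [mem1_true h]
    simp

lemma fin2_cases (a c : Fin 2) : c = a ∨ c = a + 1 := by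
  fin_cases a <;> fin_cases c <;> simp <;> rfl

lemma card_filter_four {α : Type*} [DecidableEq α] (ω : α → Bool) (x1 x2 x3 x4 : α)
    (h12 : x1 ≠ x2) (h13 : x1 ≠ x3) (h14 : x1 ≠ x4) (h23 : x2 ≠ x3) (h24 : x2 ≠ x4)
    (h34 : x3 ≠ x4) :
    (({x1, x2, x3, x4} : Finset α).filter (fun u => ω u = true)).card
      = (ω x1).toNat + (ω x2).toNat + (ω x3).toNat + (ω x4).toNat := by
  rw [Finset.card_filter]
  rw [show ({x1, x2, x3, x4} : Finset α) = insert x1 (insert x2 (insert x3 {x4})) from rfl]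
  rw [Finset.sum_insert (by simp [h12, h13, h14]), Finset.sum_insert (by simp [h23, h24]),
    Finset.sum_insert (by simp [h34]), Finset.sum_singleton]
  cases ω x1 <;> cases ω x2 <;> cases ω x3 <;> cases ω x4 <;> rfl

lemma card_four {α : Type*} [DecidableEq α] (x1 x2 x3 x4 : α)
    (h12 : x1 ≠ x2) (h13 : x1 ≠ x3) (h14 : x1 ≠ x4) (h23 : x2 ≠ x3) (h24 : x2 ≠ x4)
    (h34 : x3 ≠ x4) : ({x1, x2, x3, x4} : Finset α).card = 4 := by
  rw [show ({x1, x2, x3, x4} : Finset α) = insert x1 (insert x2 (insert x3 {x4})) from rfl]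
  rw [Finset.card_insert_of_notMem (by simp [h12, h13, h14]),
    Finset.card_insert_of_notMem (by simp [h23, h24]),
    Finset.card_insert_of_notMem (by simp [h34]), Finset.card_singleton]

lemma legalP_iff [NeZero m] (hm : 3 ≤ m) (S : Finset (Fin 2 × ℕ)) (a : Fin 2) (i : Fin m)
    (hi : (i : ℕ) ≠ 0) :
    IsLegal (petersen m 1) (posP m S) (a, i) ↔
      (pv m S a (i : ℕ) = true ∧ 2 < wgt m S a (i : ℕ)) := by
  have h2 : 2 ≤ m := by omega
  have hd := nbr_distinct hm i
  have hrow := row_succ_ne a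
  have hIlt := i.isLt
  have hne12 : (a, i) ≠ (a, i + 1) := fun h => hd.1 (congrArg Prod.snd h).symm
  have hne13 : (a, i) ≠ (a, i - 1) := fun h => hd.2.1 (congrArg Prod.snd h).symm
  have hne14 : (a, i) ≠ (a + 1, i) := fun h => hrow (congrArg Prod.fst h).symm
  have hne23 : (a, i + 1) ≠ (a, i - 1) := fun h => hd.2.2 (congrArg Prod.snd h)
  have hne24 : (a, i + 1) ≠ (a + 1, i) := fun h => hrow (congrArg Prod.fst h).symm
  have hne34 : (a, i - 1) ≠ (a + 1, i) := fun h => hrow (congrArg Prod.fst h).symm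
  have e0 : posP m S (a, i) = pv m S a (i : ℕ) := if_neg hi
  have e1 : posP m S (a, i + 1) = (if (i : ℕ) = m - 1 then false
      else pv m S a ((i : ℕ) + 1)) := by
    unfold posP
    rw [val_add_one h2]
    split_ifs <;> first | rfl | omega | contradiction
  have e2 : posP m S (a, i - 1) = (if (i : ℕ) = 1 then false
      else pv m S a ((i : ℕ) - 1)) := by
    unfold posP
    rw [val_sub_one h2]
    split_ifs <;> first | rfl | omega | contradiction
  have e3 : posP m S (a + 1, i) = pv m S (a + 1) (i : ℕ) := if_neg hi
  rw [isLegal_iff_card, petersen_closedNbhd hm]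
  unfold nbhdWeight
  rw [petersen_closedNbhd hm,
    card_filter_four _ _ _ _ _ hne12 hne13 hne14 hne23 hne24 hne34,
    card_four _ _ _ _ hne12 hne13 hne14 hne23 hne24 hne34,
    e0, e1, e2, e3]
  unfold wgt
  have hx : ∀ (b : Bool) (c : Prop) [Decidable c],
      (if c then (false : Bool) else b).toNat = if c then 0 else b.toNat := by
    intro b c _
    split_ifs <;> rfl
  rw [hx, hx]
  constructor
  · rintro ⟨hA, hB⟩
    exact ⟨hA, by omega⟩
  · rintro ⟨hA, hB⟩
    exact ⟨hA, by omega⟩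

lemma legalG_iff (hm : 3 ≤ m) (S : Finset (Fin 2 × ℕ)) (a : Fin 2) (j : Fin (m + 1))
    (hj1 : 1 ≤ (j : ℕ)) (hj2 : (j : ℕ) ≤ m - 1) :
    IsLegal (gridGraph (m + 1)) (posG m S) (a, j) ↔
      (pv m S a (j : ℕ) = true ∧ 2 < wgt m S a (j : ℕ)) := by
  have hlt : (j : ℕ) + 1 < m + 1 := by omega
  have hrow := row_succ_ne a
  set x2 : Fin (m + 1) := ⟨(j : ℕ) + 1, hlt⟩ with hx2
  set x3 : Fin (m + 1) := ⟨(j : ℕ) - 1, by omega⟩ with hx3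
  have hne12 : (a, j) ≠ (a, x2) := by
    intro h
    have := congrArg (fun p => ((p.2 : Fin (m+1)) : ℕ)) h
    simp [hx2] at this
  have hne13 : (a, j) ≠ (a, x3) := by
    intro h
    have := congrArg (fun p => ((p.2 : Fin (m+1)) : ℕ)) h
    simp [hx3] at this
    omega
  have hne14 : (a, j) ≠ (a + 1, j) := fun h => hrow (congrArg Prod.fst h).symm
  have hne23 : (a, x2) ≠ (a, x3) := by
    intro h
    have := congrArg (fun p => ((p.2 : Fin (m+1)) : ℕ)) h
    simp [hx2, hx3] at this
    omega
  have hne24 : (a, x2) ≠ (a + 1, j) := fun h => hrow (congrArg Prod.fst h).symm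
  have hne34 : (a, x3) ≠ (a + 1, j) := fun h => hrow (congrArg Prod.fst h).symm
  have e0 : posG m S (a, j) = pv m S a (j : ℕ) :=
    if_neg (show ¬((j : ℕ) = 0 ∨ (j : ℕ) = m) by omega)
  have e1 : posG m S (a, x2) = (if (j : ℕ) = m - 1 then false
      else pv m S a ((j : ℕ) + 1)) := by
    by_cases h : (j : ℕ) = m - 1
    · rw [if_pos h]
      show (if ((j : ℕ) + 1 = 0 ∨ (j : ℕ) + 1 = m) then false else pv m S a ((j : ℕ) + 1))
        = false
      rw [if_pos (Or.inr (by omega))]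
    · rw [if_neg h]
      show (if ((j : ℕ) + 1 = 0 ∨ (j : ℕ) + 1 = m) then false else pv m S a ((j : ℕ) + 1))
        = pv m S a ((j : ℕ) + 1)
      rw [if_neg (by omega)]
  have e2 : posG m S (a, x3) = (if (j : ℕ) = 1 then false
      else pv m S a ((j : ℕ) - 1)) := by
    by_cases h : (j : ℕ) = 1
    · rw [if_pos h]
      show (if ((j : ℕ) - 1 = 0 ∨ (j : ℕ) - 1 = m) then false else pv m S a ((j : ℕ) - 1))
        = false
      rw [if_pos (Or.inl (by omega))]
    · rw [if_neg h]
      show (if ((j : ℕ) - 1 = 0 ∨ (j : ℕ) - 1 = m) then false else pv m S a ((j : ℕ) - 1))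
        = pv m S a ((j : ℕ) - 1)
      rw [if_neg (by omega)]
  have e3 : posG m S (a + 1, j) = pv m S (a + 1) (j : ℕ) :=
    if_neg (show ¬((j : ℕ) = 0 ∨ (j : ℕ) = m) by omega)
  rw [isLegal_iff_card, grid_closedNbhd a j hj1 hlt]
  unfold nbhdWeight
  rw [grid_closedNbhd a j hj1 hlt,
    card_filter_four _ _ _ _ _ hne12 hne13 hne14 hne23 hne24 hne34,
    card_four _ _ _ _ hne12 hne13 hne14 hne23 hne24 hne34,
    e0, e1, e2, e3]
  unfold wgt
  have hx : ∀ (b : Bool) (c : Prop) [Decidable c],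
      (if c then (false : Bool) else b).toNat = if c then 0 else b.toNat := by
    intro b c _
    split_ifs <;> rfl
  rw [hx, hx]
  constructor
  · rintro ⟨hA, hB⟩
    exact ⟨hA, by omega⟩
  · rintro ⟨hA, hB⟩
    exact ⟨hA, by omega⟩

end Core

end Toggle


namespace Toggle

section CoreLemma

variable {m : ℕ}

lemma toNat_le (b : Bool) : b.toNat ≤ 1 := by cases b <;> simp

lemma pv_expand (S : Finset (Fin 2 × ℕ)) (a : Fin 2) (i : ℕ) :
    pv m S a i = (Qv m a i).xor ((mem1 S a (i - 1)).xor ((mem1 S a (i + 1)).xor (occ1 S i))) :=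
  rfl

lemma occ1_false {S : Finset (Fin 2 × ℕ)} {k : ℕ} (h0 : mem1 S 0 k = false)
    (h1 : mem1 S 1 k = false) : occ1 S k = false := by
  unfold occ1
  rw [h0, h1]
  rfl

lemma pair_ne_col {a b : Fin 2} {x y : ℕ} (h : x ≠ y) : (a, x) ≠ (b, y) :=
  fun he => h (congrArg Prod.snd he)

lemma pair_ne_row {a b : Fin 2} {x y : ℕ} (h : a ≠ b) : (a, x) ≠ (b, y) :=
  fun he => h (congrArg Prod.fst he)

lemma fin2_add11 (a : Fin 2) : a + 1 + 1 = a := by fin_cases a <;> rfl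

lemma Qv_eq_true_of (hw : pv m S a i = true)
    (h : pv m S a i = Qv m a i) : Qv m a i = true := by rw [← h]; exact hw

/-- THE core lemma: a legal move in a position `posP/posG S` must be at an interior
column compatible with `S`. -/
lemma core_lemma (hm : 3 ≤ m) {S : Finset (Fin 2 × ℕ)} (hS : Sok m S) (a : Fin 2) (i : ℕ)
    (h1 : 1 ≤ i) (h2 : i ≤ m - 1) (hw0 : pv m S a i = true) (hcnt : 2 < wgt m S a i) :
    2 ≤ i ∧ i + 2 ≤ m ∧ ∀ p ∈ S, p.2 + 2 ≤ i ∨ i + 2 ≤ p.2 := by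
  unfold wgt at hcnt
  by_cases hC : ∃ c : Fin 2, (c, i) ∈ S
  · -- column i occupied: w0 is false, contradiction
    exfalso
    obtain ⟨b, hb⟩ := hC
    obtain ⟨hb1, hb2⟩ := hS.1 _ hb
    simp only at hb1 hb2
    have f1 : mem1 S a (i - 1) = false :=
      mem1_near_false hS hb a (i - 1) (by omega) (by omega) (pair_ne_col (by omega))
    have f2 : mem1 S a (i + 1) = false :=
      mem1_near_false hS hb a (i + 1) (by omega) (by omega) (pair_ne_col (by omega))
    have f3 : occ1 S i = true := occ1_true_of_mem hb
    rw [pv_expand, f1, f2, f3, Qv_true (by rintro ⟨-, hh⟩; omega)] at hw0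
    simp at hw0
  by_cases hL : ∃ c : Fin 2, (c, i - 1) ∈ S
  · -- column i-1 occupied
    exfalso
    obtain ⟨b, hb⟩ := hL
    obtain ⟨hb1, hb2⟩ := hS.1 _ hb
    simp only at hb1 hb2
    have hi3 : 3 ≤ i := by omega
    have fci : ∀ c, mem1 S c i = false := fun c => mem1_false (fun hh => hC ⟨c, hh⟩)
    have focc_i : occ1 S i = false := occ1_false (fci 0) (fci 1)
    have focc_im1 : occ1 S (i - 1) = true := occ1_true_of_mem hb
    have fci2 : ∀ c, mem1 S c (i - 1 - 1) = false := fun c =>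
      mem1_near_false hS hb c (i - 1 - 1) (by omega) (by omega) (pair_ne_col (by omega))
    -- wl is always false here
    have A2 : mem1 S a (i - 1 + 1) = false := by
      rw [show i - 1 + 1 = i from by omega]
      exact fci a
    have wl : pv m S a (i - 1) = false := by
      rw [pv_expand, fci2 a, A2, focc_im1, Qv_true (by rintro ⟨-, hh⟩; omega)]
      try rfl
    rw [if_neg (show ¬ i = 1 by omega), wl] at hcnt
    rcases fin2_cases a b with hab | hab
    · -- member is (a, i-1)
      rw [hab] at hb
      by_cases hP : mem1 S a (i + 1) = true
      · -- also (a, i+1) ∈ S : w0 true, wr false, wc true: total ≤ 2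
        have hp : (a, i + 1) ∈ S := of_decide_eq_true hP
        obtain ⟨hp1, hp2⟩ := hS.1 _ hp
        simp only at hp1 hp2
        have B1 : mem1 S a (i + 1 - 1) = false := by
          rw [show i + 1 - 1 = i from by omega]
          exact fci a
        have B2 : mem1 S a (i + 1 + 1) = false :=
          mem1_near_false hS hp a (i + 1 + 1) (by omega) (by omega) (pair_ne_col (by omega))
        have B3 : occ1 S (i + 1) = true := occ1_true_of_mem hp
        have wr : pv m S a (i + 1) = false := by
          rw [pv_expand, B1, B2, B3, Qv_true (by rintro ⟨-, hh⟩; omega)]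
          try rfl
        rw [if_neg (show ¬ i = m - 1 by omega), wr] at hcnt
        have t1 := toNat_le (pv m S a i)
        have t2 := toNat_le (pv m S (a + 1) i)
        simp at hcnt
        omega
      · -- (a,i+1) ∉ S: w0 = !Qv: forces a = 1, i = m-1; then wr-term 0, wl false
        have hPf : mem1 S a (i + 1) = false := by
          cases hmem : mem1 S a (i + 1)
          · rfl
          · exact absurd hmem hP
        have C1 : mem1 S a (i - 1) = true := mem1_true hb
        rw [pv_expand, C1, hPf, focc_i] at hw0
        have hQf : Qv m a i = false := by
          cases hq : Qv m a i
          · rfl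
          · rw [hq] at hw0
            simp at hw0
        rw [Qv] at hQf
        simp only [Bool.not_eq_false', decide_eq_true_eq] at hQf
        obtain ⟨rfl, hor⟩ := hQf
        have him : i = m - 1 := by omega
        rw [if_pos (show i = m - 1 by omega)] at hcnt
        have t1 := toNat_le (pv m S 1 i)
        have t2 := toNat_le (pv m S 0 i)
        simp at hcnt
        omega
    · -- member is (a+1, i-1)
      rw [hab] at hb
      have fam1 : mem1 S a (i - 1) = false :=
        mem1_near_false hS hb a (i - 1) (by omega) (by omega)
          (pair_ne_row (by intro hh; exact row_succ_ne a hh.symm))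
      by_cases hP : mem1 S a (i + 1) = true
      · -- w0 = !Qv = false: contradiction
        have hp : (a, i + 1) ∈ S := of_decide_eq_true hP
        obtain ⟨hp1, hp2⟩ := hS.1 _ hp
        simp only at hp1 hp2
        rw [pv_expand, fam1, hP, focc_i, Qv_true (by rintro ⟨-, hh⟩; omega)] at hw0
        simp at hw0
      · have hPf : mem1 S a (i + 1) = false := by
          cases hmem : mem1 S a (i + 1)
          · rfl
          · exact absurd hmem hP
        -- w0 = Qv a i = true (given), so ¬(a=1 ∧ i=m-1)
        rw [pv_expand, fam1, hPf, focc_i] at hw0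
        have hQt : Qv m a i = true := by
          cases hq : Qv m a i
          · rw [hq] at hw0
            simp at hw0
          · rfl
        have hQna : ¬(a = 1 ∧ (i = 1 ∨ i = m - 1)) := by
          intro hh
          rw [Qv_false hh] at hQt
          simp at hQt
        by_cases hQ : mem1 S (a + 1) (i + 1) = true
        · -- wc true, wl false, wr false, w0 true: total 2
          have hq : (a + 1, i + 1) ∈ S := of_decide_eq_true hQ
          obtain ⟨hq1, hq2⟩ := hS.1 _ hq
          simp only at hq1 hq2
          have D1 : mem1 S (a + 1) (i - 1) = true := mem1_true hb
          have D3 : occ1 S i = false := focc_i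
          have wc : pv m S (a + 1) i = true := by
            rw [pv_expand, D1, hQ, D3, Qv_true (by rintro ⟨-, hh⟩; omega)]
            try rfl
          have B1 : mem1 S a (i + 1 - 1) = false := by
            rw [show i + 1 - 1 = i from by omega]
            exact fci a
          have B2 : mem1 S a (i + 1 + 1) = false :=
            mem1_near_false hS hq a (i + 1 + 1) (by omega) (by omega)
              (pair_ne_col (by omega))
          have B3 : occ1 S (i + 1) = true := occ1_true_of_mem hq
          have wr : pv m S a (i + 1) = false := by
            rw [pv_expand, B1, B2, B3, Qv_true (by rintro ⟨-, hh⟩; omega)]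
            try rfl
          rw [if_neg (show ¬ i = m - 1 by omega), wr, wc] at hcnt
          have t1 := toNat_le (pv m S a i)
          simp at hcnt
          omega
        · -- col i+1 unoccupied: wc = !Qv(a+1), wl false; split on i = m-1
          have hQf : mem1 S (a + 1) (i + 1) = false := by
            cases hmem : mem1 S (a + 1) (i + 1)
            · rfl
            · exact absurd hmem hQ
          have foccip1 : occ1 S (i + 1) = false := by
            have hall : ∀ c, mem1 S c (i + 1) = false := by
              intro c
              rcases fin2_cases a c with rfl | rfl
              · exact hPf
              · exact hQf
            exact occ1_false (hall 0) (hall 1)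
          by_cases him : i = m - 1
          · -- wr-term is 0; w0 + wc ≤ 2
            rw [if_pos him] at hcnt
            have t1 := toNat_le (pv m S a i)
            have t2 := toNat_le (pv m S (a + 1) i)
            simp at hcnt
            omega
          · -- wc = false since Qv (a+1) i = true
            have E1 : mem1 S (a + 1) (i - 1) = true := mem1_true hb
            have wc : pv m S (a + 1) i = false := by
              rw [pv_expand, E1, hQf, focc_i, Qv_true (by rintro ⟨-, hh⟩; omega)]
              try rfl
            rw [if_neg him, wc] at hcnt
            have t1 := toNat_le (pv m S a i)
            have t2 := toNat_le (pv m S a (i + 1))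
            simp at hcnt
            omega
  by_cases hR : ∃ c : Fin 2, (c, i + 1) ∈ S
  · -- column i+1 occupied (columns i-1, i unoccupied)
    exfalso
    obtain ⟨b, hb⟩ := hR
    obtain ⟨hb1, hb2⟩ := hS.1 _ hb
    simp only at hb1 hb2
    have fci : ∀ c, mem1 S c i = false := fun c => mem1_false (fun hh => hC ⟨c, hh⟩)
    have fcim1 : ∀ c, mem1 S c (i - 1) = false := fun c => mem1_false (fun hh => hL ⟨c, hh⟩)
    have focc_i : occ1 S i = false := occ1_false (fci 0) (fci 1)
    have focc_ip1 : occ1 S (i + 1) = true := occ1_true_of_mem hb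
    have him : ¬ i = m - 1 := by omega
    -- wr is always false here
    have B1 : mem1 S a (i + 1 - 1) = false := by
      rw [show i + 1 - 1 = i from by omega]
      exact fci a
    have B2 : mem1 S a (i + 1 + 1) = false :=
      mem1_near_false hS hb a (i + 1 + 1) (by omega) (by omega) (pair_ne_col (by omega))
    have wr : pv m S a (i + 1) = false := by
      rw [pv_expand, B1, B2, focc_ip1, Qv_true (by rintro ⟨-, hh⟩; omega)]
      try rfl
    rw [if_neg him, wr] at hcnt
    rcases fin2_cases a b with hab | hab
    · -- member is (a, i+1): w0 = !Qv forces a = 1, i = 1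
      rw [hab] at hb
      have hP : mem1 S a (i + 1) = true := mem1_true hb
      rw [pv_expand, fcim1 a, hP, focc_i] at hw0
      have hQf : Qv m a i = false := by
        cases hq : Qv m a i
        · rfl
        · rw [hq] at hw0
          simp at hw0
      rw [Qv] at hQf
      simp only [Bool.not_eq_false', decide_eq_true_eq] at hQf
      obtain ⟨rfl, hor⟩ := hQf
      have hi1 : i = 1 := by omega
      -- wl-term is 0 since i = 1, so total = w0 + wc ≤ 2
      rw [if_pos (show i = 1 by omega)] at hcnt
      have t1 := toNat_le (pv m S 1 i)
      have t2 := toNat_le (pv m S 0 i)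
      simp at hcnt
      omega
    · -- member is (a+1, i+1)
      rw [hab] at hb
      have fap : mem1 S a (i + 1) = false :=
        mem1_near_false hS hb a (i + 1) (by omega) (by omega)
          (pair_ne_row (by intro hh; exact row_succ_ne a hh.symm))
      rw [pv_expand, fcim1 a, fap, focc_i] at hw0
      have hQt : Qv m a i = true := by
        cases hq : Qv m a i
        · rw [hq] at hw0
          simp at hw0
        · rfl
      have hQna : ¬(a = 1 ∧ (i = 1 ∨ i = m - 1)) := by
        intro hh
        rw [Qv_false hh] at hQt
        simp at hQt
      by_cases hi1 : i = 1
      · -- wl-term 0, wr false: w0 + wc ≤ 2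
        rw [if_pos hi1] at hcnt
        have t1 := toNat_le (pv m S a i)
        have t2 := toNat_le (pv m S (a + 1) i)
        simp at hcnt
        omega
      · -- wl: compute false? No: wl unknown; instead wc = !Qv(a+1) with Qv(a+1) true
        -- unless a=0 ∧ i=1 (excluded): wc false; and wl... need wl false too? total:
        -- w0(1) + wl(≤1) + 0 + wc(0) ≤ 2: OK!
        rw [if_neg hi1] at hcnt
        have E1 : mem1 S (a + 1) (i - 1) = false := fcim1 (a + 1)
        have E2 : mem1 S (a + 1) (i + 1) = true := mem1_true hb
        have wc : pv m S (a + 1) i = false := by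
          rw [pv_expand, E1, E2, focc_i, Qv_true (by rintro ⟨-, hh⟩; omega)]
          try rfl
        rw [wc] at hcnt
        have t1 := toNat_le (pv m S a i)
        have t2 := toNat_le (pv m S a (i - 1))
        simp at hcnt
        omega
  · -- columns i-1, i, i+1 all unoccupied
    have fci : ∀ c, mem1 S c i = false := fun c => mem1_false (fun hh => hC ⟨c, hh⟩)
    have fcim1 : ∀ c, mem1 S c (i - 1) = false := fun c => mem1_false (fun hh => hL ⟨c, hh⟩)
    have fcip1 : ∀ c, mem1 S c (i + 1) = false := fun c => mem1_false (fun hh => hR ⟨c, hh⟩)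
    have focc_i : occ1 S i = false := occ1_false (fci 0) (fci 1)
    rw [pv_expand, fcim1 a, fcip1 a, focc_i] at hw0
    have hQt : Qv m a i = true := by
      cases hq : Qv m a i
      · rw [hq] at hw0
        simp at hw0
      · rfl
    have hQna : ¬(a = 1 ∧ (i = 1 ∨ i = m - 1)) := by
      intro hh
      rw [Qv_false hh] at hQt
      simp at hQt
    have ha0 : i = 1 ∨ i = m - 1 → a = 0 := by
      intro hh
      rcases fin2_cases 0 a with h | h
      · exact h
      · exfalso
        apply hQna
        refine ⟨?_, hh⟩
        rw [h]
        rfl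
    by_cases hi1 : i = 1
    · exfalso
      have ha := ha0 (Or.inl hi1)
      subst ha
      have wc : pv m S (0 + 1) i = false := by
        rw [pv_expand, fcim1 _, fcip1 _, focc_i, Qv_false ⟨show (0 : Fin 2) + 1 = 1 from rfl, Or.inl hi1⟩]
        try rfl
      rw [if_pos hi1, if_neg (show ¬ i = m - 1 by omega), wc] at hcnt
      have t1 := toNat_le (pv m S 0 i)
      have t2 := toNat_le (pv m S 0 (i + 1))
      simp at hcnt
      omega
    by_cases him : i = m - 1
    · exfalso
      have ha := ha0 (Or.inr him)
      subst ha
      have wc : pv m S (0 + 1) i = false := by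
        rw [pv_expand, fcim1 _, fcip1 _, focc_i, Qv_false ⟨show (0 : Fin 2) + 1 = 1 from rfl, Or.inr him⟩]
        try rfl
      rw [if_pos him, if_neg hi1, wc] at hcnt
      have t1 := toNat_le (pv m S 0 i)
      have t2 := toNat_le (pv m S 0 (i - 1))
      simp at hcnt
      omega
    · refine ⟨by omega, by omega, ?_⟩
      intro p hp
      have hki : p.2 ≠ i := fun hh => hC ⟨p.1, by rw [← hh]; exact hp⟩
      have hkl : p.2 ≠ i - 1 := fun hh => hL ⟨p.1, by rw [← hh]; exact hp⟩
      have hkr : p.2 ≠ i + 1 := fun hh => hR ⟨p.1, by rw [← hh]; exact hp⟩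
      omega

end CoreLemma

end Toggle


namespace Toggle

section Insert

variable {m : ℕ}

lemma mem1_insert (S : Finset (Fin 2 × ℕ)) (a : Fin 2) (i : ℕ) (c : Fin 2) (k : ℕ) :
    mem1 (insert (a, i) S) c k = (decide (c = a ∧ k = i) || mem1 S c k) := by
  unfold mem1
  simp [Finset.mem_insert, Prod.ext_iff]

lemma Sok_insert {S : Finset (Fin 2 × ℕ)} (hS : Sok m S) (a : Fin 2) (i : ℕ)
    (h2 : 2 ≤ i) (hm2 : i + 2 ≤ m) (hfree : ∀ p ∈ S, p.2 + 2 ≤ i ∨ i + 2 ≤ p.2) :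
    Sok m (insert (a, i) S) := by
  constructor
  · intro p hp
    rcases Finset.mem_insert.mp hp with rfl | hp'
    · exact ⟨h2, hm2⟩
    · exact hS.1 _ hp'
  · intro p hp q hq hne
    rcases Finset.mem_insert.mp hp with rfl | hp' <;>
      rcases Finset.mem_insert.mp hq with rfl | hq'
    · exact absurd rfl hne
    · rcases hfree _ hq' with h | h
      · right; simpa using h
      · left; simpa using h
    · exact hfree _ hp'
    · exact hS.2 _ hp' _ hq' hne

lemma fin2_or_decide (a : Fin 2) :
    (decide ((0 : Fin 2) = a) || decide ((1 : Fin 2) = a)) = true := by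
  fin_cases a <;> rfl

lemma pv_insert {S : Finset (Fin 2 × ℕ)} (hS : Sok m S) {a : Fin 2} {i : ℕ}
    (h2 : 2 ≤ i) (hm2 : i + 2 ≤ m) (hfree : ∀ p ∈ S, p.2 + 2 ≤ i ∨ i + 2 ≤ p.2)
    (b : Fin 2) (j : ℕ) (hj : 1 ≤ j) :
    pv m (insert (a, i) S) b j =
      if (b = a ∧ (j = i - 1 ∨ j = i + 1)) ∨ j = i then !(pv m S b j)
      else pv m S b j := by
  have hcolfree : ∀ c : Fin 2, mem1 S c i = false := by
    intro c
    apply mem1_false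
    intro hmem
    rcases hfree _ hmem with h | h <;> simp at h <;> omega
  have dfalse : ∀ (c : Fin 2) (k : ℕ), k ≠ i → decide (c = a ∧ k = i) = false :=
    fun c k h => decide_eq_false (fun hh => h hh.2)
  have docc : ∀ (k : ℕ), k ≠ i →
      occ1 (insert (a, i) S) k = occ1 S k := by
    intro k h
    unfold occ1
    rw [mem1_insert, mem1_insert, dfalse _ _ h, dfalse _ _ h]
    simp
  have hcase : j = i - 1 ∨ j = i ∨ j = i + 1 ∨ (j + 1 < i ∨ i + 1 < j) := by omega
  have hocS : occ1 S i = false := occ1_false (hcolfree 0) (hcolfree 1)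
  rcases hcase with hji | hji | hji | hji
  · -- j = i - 1
    subst hji
    by_cases hba : b = a
    · rw [if_pos (show (b = a ∧ (i - 1 = i - 1 ∨ i - 1 = i + 1)) ∨ i - 1 = i from
        Or.inl ⟨hba, Or.inl rfl⟩)]
      rw [pv_expand, pv_expand]
      simp only [mem1_insert]
      rw [dfalse b (i - 1 - 1) (by omega), docc (i - 1) (by omega),
        show i - 1 + 1 = i from by omega, hcolfree b, decide_eq_true ⟨hba, rfl⟩]
      cases hQ : Qv m b (i - 1) <;> cases hx : mem1 S b (i - 1 - 1) <;>
        cases hz : occ1 S (i - 1) <;> rfl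
    · rw [if_neg (show ¬((b = a ∧ (i - 1 = i - 1 ∨ i - 1 = i + 1)) ∨ i - 1 = i) from ?_)]
      · rw [pv_expand, pv_expand]
        simp only [mem1_insert]
        rw [dfalse b (i - 1 - 1) (by omega), docc (i - 1) (by omega),
          show i - 1 + 1 = i from by omega, hcolfree b,
          decide_eq_false (fun hh => hba hh.1)]
        simp only [Bool.false_or, Bool.or_false]
      · rintro (⟨h, -⟩ | h)
        · exact hba h
        · omega
  · -- j = i
    subst hji
    rw [if_pos (show (b = a ∧ (j = j - 1 ∨ j = j + 1)) ∨ j = j from Or.inr rfl)]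
    have doc2 : occ1 (insert (a, j) S) j = true := by
      unfold occ1
      rw [mem1_insert, mem1_insert, hcolfree 0, hcolfree 1]
      simp only [Bool.or_false, and_true]
      exact fin2_or_decide a
    rw [pv_expand, pv_expand]
    simp only [mem1_insert]
    rw [dfalse b (j - 1) (by omega), dfalse b (j + 1) (by omega), doc2, hocS]
    simp only [Bool.false_or]
    cases hQ : Qv m b j <;> cases hx : mem1 S b (j - 1) <;>
      cases hy : mem1 S b (j + 1) <;> rfl
  · -- j = i + 1
    subst hji
    by_cases hba : b = a
    · rw [if_pos (show (b = a ∧ (i + 1 = i - 1 ∨ i + 1 = i + 1)) ∨ i + 1 = i from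
        Or.inl ⟨hba, Or.inr rfl⟩)]
      rw [pv_expand, pv_expand]
      simp only [mem1_insert]
      rw [dfalse b (i + 1 + 1) (by omega), docc (i + 1) (by omega),
        show i + 1 - 1 = i from by omega, hcolfree b, decide_eq_true ⟨hba, rfl⟩]
      cases hQ : Qv m b (i + 1) <;> cases hy : mem1 S b (i + 1 + 1) <;>
        cases hz : occ1 S (i + 1) <;> rfl
    · rw [if_neg (show ¬((b = a ∧ (i + 1 = i - 1 ∨ i + 1 = i + 1)) ∨ i + 1 = i) from ?_)]
      · rw [pv_expand, pv_expand]
        simp only [mem1_insert]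
        rw [dfalse b (i + 1 + 1) (by omega), docc (i + 1) (by omega),
          show i + 1 - 1 = i from by omega, hcolfree b,
          decide_eq_false (fun hh => hba hh.1)]
        simp only [Bool.false_or, Bool.or_false]
      · rintro (⟨h, -⟩ | h)
        · exact hba h
        · omega
  · -- j far from i
    rw [if_neg (show ¬((b = a ∧ (j = i - 1 ∨ j = i + 1)) ∨ j = i) from ?_),
      pv_expand, pv_expand]
    · simp only [mem1_insert]
      rw [dfalse b (j - 1) (by omega), dfalse b (j + 1) (by omega), docc j (by omega)]
      simp only [Bool.false_or]
    · rintro (⟨-, h | h⟩ | h) <;> omega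

end Insert

end Toggle


namespace Toggle

section Moves

variable {m : ℕ}

lemma move_posP [NeZero m] (hm : 3 ≤ m) {S : Finset (Fin 2 × ℕ)} (hS : Sok m S)
    (a : Fin 2) (i : Fin m) (h2 : 2 ≤ (i : ℕ)) (hm2 : (i : ℕ) + 2 ≤ m)
    (hfree : ∀ p ∈ S, p.2 + 2 ≤ (i : ℕ) ∨ (i : ℕ) + 2 ≤ p.2) :
    move (petersen m 1) (posP m S) (a, i) = posP m (insert (a, (i : ℕ)) S) := by
  have hval1 : ((i + 1 : Fin m) : ℕ) = (i : ℕ) + 1 := by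
    rw [val_add_one (by omega), if_neg (by omega)]
  have hval2 : ((i - 1 : Fin m) : ℕ) = (i : ℕ) - 1 := by
    rw [val_sub_one (by omega), if_neg (by omega)]
  funext p
  obtain ⟨b, j⟩ := p
  unfold move
  rw [petersen_closedNbhd hm]
  by_cases hj0 : (j : ℕ) = 0
  · have hnm : (b, j) ∉ ({(a, i), (a, i + 1), (a, i - 1), (a + 1, i)} :
        Finset (Fin 2 × Fin m)) := by
      simp only [Finset.mem_insert, Finset.mem_singleton]
      rintro (h | h | h | h) <;>
        · have hv := congrArg (fun p : Fin 2 × Fin m => ((p.2 : Fin m) : ℕ)) h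
          simp only [hval1, hval2] at hv
          omega
    rw [if_neg hnm]
    show posP m S (b, j) = posP m (insert (a, (i : ℕ)) S) (b, j)
    unfold posP
    rw [if_pos hj0, if_pos hj0]
  · have hj1 : 1 ≤ (j : ℕ) := by omega
    by_cases hcond : (b = a ∧ ((j : ℕ) = (i : ℕ) - 1 ∨ (j : ℕ) = (i : ℕ) + 1)) ∨
        (j : ℕ) = (i : ℕ)
    · have hmem : (b, j) ∈ ({(a, i), (a, i + 1), (a, i - 1), (a + 1, i)} :
          Finset (Fin 2 × Fin m)) := by
        simp only [Finset.mem_insert, Finset.mem_singleton]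
        rcases hcond with ⟨hba, hj | hj⟩ | hj
        · have hji : j = i - 1 := Fin.ext (by rw [hval2]; exact hj)
          right; right; left
          rw [hba, hji]
        · have hji : j = i + 1 := Fin.ext (by rw [hval1]; exact hj)
          right; left
          rw [hba, hji]
        · have hji : j = i := Fin.ext hj
          rcases fin2_cases a b with hba | hba
          · left
            rw [hba, hji]
          · right; right; right
            rw [hba, hji]
      rw [if_pos hmem]
      show (!(posP m S (b, j))) = posP m (insert (a, (i : ℕ)) S) (b, j)
      unfold posP
      rw [if_neg hj0, if_neg hj0, pv_insert hS h2 hm2 hfree b (j : ℕ) hj1, if_pos hcond]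
    · have hnm : (b, j) ∉ ({(a, i), (a, i + 1), (a, i - 1), (a + 1, i)} :
          Finset (Fin 2 × Fin m)) := by
        simp only [Finset.mem_insert, Finset.mem_singleton]
        rintro (h | h | h | h)
        · exact hcond (Or.inr (congrArg (fun p : Fin 2 × Fin m => ((p.2 : Fin m) : ℕ)) h))
        · refine hcond (Or.inl ⟨congrArg Prod.fst h, Or.inr ?_⟩)
          have hv := congrArg (fun p : Fin 2 × Fin m => ((p.2 : Fin m) : ℕ)) h
          simpa [hval1] using hv
        · refine hcond (Or.inl ⟨congrArg Prod.fst h, Or.inl ?_⟩)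
          have hv := congrArg (fun p : Fin 2 × Fin m => ((p.2 : Fin m) : ℕ)) h
          simpa [hval2] using hv
        · exact hcond (Or.inr (congrArg (fun p : Fin 2 × Fin m => ((p.2 : Fin m) : ℕ)) h))
      rw [if_neg hnm]
      show posP m S (b, j) = posP m (insert (a, (i : ℕ)) S) (b, j)
      unfold posP
      rw [if_neg hj0, if_neg hj0, pv_insert hS h2 hm2 hfree b (j : ℕ) hj1, if_neg hcond]

lemma move_posG (hm : 3 ≤ m) {S : Finset (Fin 2 × ℕ)} (hS : Sok m S)
    (a : Fin 2) (i : ℕ) (h2 : 2 ≤ i) (hm2 : i + 2 ≤ m)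
    (hfree : ∀ p ∈ S, p.2 + 2 ≤ i ∨ i + 2 ≤ p.2) :
    move (gridGraph (m + 1)) (posG m S) (a, ⟨i, by omega⟩) = posG m (insert (a, i) S) := by
  have hi1 : 1 ≤ ((⟨i, by omega⟩ : Fin (m + 1)) : ℕ) := by
    show 1 ≤ i
    omega
  have hilt : ((⟨i, by omega⟩ : Fin (m + 1)) : ℕ) + 1 < m + 1 := by
    show i + 1 < m + 1
    omega
  funext p
  obtain ⟨b, j⟩ := p
  unfold move
  rw [grid_closedNbhd a (⟨i, by omega⟩ : Fin (m + 1)) hi1 hilt]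
  by_cases hj0 : (j : ℕ) = 0 ∨ (j : ℕ) = m
  · have hnm : (b, j) ∉ ({((a, ⟨i, by omega⟩) : Fin 2 × Fin (m + 1)),
        (a, ⟨i + 1, by omega⟩), (a, ⟨i - 1, by omega⟩), (a + 1, ⟨i, by omega⟩)} :
        Finset (Fin 2 × Fin (m + 1))) := by
      simp only [Finset.mem_insert, Finset.mem_singleton]
      rintro (h | h | h | h) <;>
        · have hv := congrArg (fun p : Fin 2 × Fin (m + 1) => ((p.2 : Fin (m + 1)) : ℕ)) h
          simp only [Fin.val_mk] at hv
          omega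
    rw [if_neg hnm]
    show posG m S (b, j) = posG m (insert (a, i) S) (b, j)
    unfold posG
    rw [if_pos hj0, if_pos hj0]
  · push_neg at hj0
    have hj1 : 1 ≤ (j : ℕ) := by omega
    have hjm : (j : ℕ) ≤ m - 1 := by
      have := j.isLt
      omega
    by_cases hcond : (b = a ∧ ((j : ℕ) = i - 1 ∨ (j : ℕ) = i + 1)) ∨ (j : ℕ) = i
    · have hmem : (b, j) ∈ ({((a, ⟨i, by omega⟩) : Fin 2 × Fin (m + 1)),
          (a, ⟨i + 1, by omega⟩), (a, ⟨i - 1, by omega⟩), (a + 1, ⟨i, by omega⟩)} :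
          Finset (Fin 2 × Fin (m + 1))) := by
        simp only [Finset.mem_insert, Finset.mem_singleton]
        rcases hcond with ⟨hba, hj | hj⟩ | hj
        · right; right; left
          rw [hba, Fin.ext_iff.mpr (show (j : ℕ) = ((⟨i - 1, by omega⟩ : Fin (m + 1)) : ℕ)
            from hj)]
        · right; left
          rw [hba, Fin.ext_iff.mpr (show (j : ℕ) = ((⟨i + 1, by omega⟩ : Fin (m + 1)) : ℕ)
            from hj)]
        · rcases fin2_cases a b with hba | hba
          · left
            rw [hba, Fin.ext_iff.mpr (show (j : ℕ) = ((⟨i, by omega⟩ : Fin (m + 1)) : ℕ)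
              from hj)]
          · right; right; right
            rw [hba, Fin.ext_iff.mpr (show (j : ℕ) = ((⟨i, by omega⟩ : Fin (m + 1)) : ℕ)
              from hj)]
      rw [if_pos hmem]
      show (!(posG m S (b, j))) = posG m (insert (a, i) S) (b, j)
      unfold posG
      rw [if_neg (show ¬((j : ℕ) = 0 ∨ (j : ℕ) = m) by omega),
        if_neg (show ¬((j : ℕ) = 0 ∨ (j : ℕ) = m) by omega),
        pv_insert hS h2 hm2 hfree b (j : ℕ) hj1, if_pos hcond]
    · have hnm : (b, j) ∉ ({((a, ⟨i, by omega⟩) : Fin 2 × Fin (m + 1)),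
          (a, ⟨i + 1, by omega⟩), (a, ⟨i - 1, by omega⟩), (a + 1, ⟨i, by omega⟩)} :
          Finset (Fin 2 × Fin (m + 1))) := by
        simp only [Finset.mem_insert, Finset.mem_singleton]
        rintro (h | h | h | h)
        · refine hcond (Or.inr ?_)
          have hv := congrArg (fun p : Fin 2 × Fin (m + 1) => ((p.2 : Fin (m + 1)) : ℕ)) h
          simpa using hv
        · refine hcond (Or.inl ⟨congrArg Prod.fst h, Or.inr ?_⟩)
          have hv := congrArg (fun p : Fin 2 × Fin (m + 1) => ((p.2 : Fin (m + 1)) : ℕ)) h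
          simpa using hv
        · refine hcond (Or.inl ⟨congrArg Prod.fst h, Or.inl ?_⟩)
          have hv := congrArg (fun p : Fin 2 × Fin (m + 1) => ((p.2 : Fin (m + 1)) : ℕ)) h
          simpa using hv
        · refine hcond (Or.inr ?_)
          have hv := congrArg (fun p : Fin 2 × Fin (m + 1) => ((p.2 : Fin (m + 1)) : ℕ)) h
          simpa using hv
      rw [if_neg hnm]
      show posG m S (b, j) = posG m (insert (a, i) S) (b, j)
      unfold posG
      rw [if_neg (show ¬((j : ℕ) = 0 ∨ (j : ℕ) = m) by omega),
        if_neg (show ¬((j : ℕ) = 0 ∨ (j : ℕ) = m) by omega),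
        pv_insert hS h2 hm2 hfree b (j : ℕ) hj1, if_neg hcond]

/-- The bisimulation: the prism position and the cut-open grid position have the same
grundy value. -/
lemma grundy_posP_eq_posG [NeZero m] (hm : 3 ≤ m) (S : Finset (Fin 2 × ℕ)) (hS : Sok m S) :
    grundy (petersen m 1) (posP m S) = grundy (gridGraph (m + 1)) (posG m S) := by
  refine grundy_eq_of_rel (petersen m 1) (gridGraph (m + 1))
    (fun ω ψ => ∃ S, Sok m S ∧ ω = posP m S ∧ ψ = posG m S) ?_ _ _ ⟨S, hS, rfl, rfl⟩
  rintro ω ψ ⟨T, hT, rfl, rfl⟩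
  constructor
  · rintro ⟨a, i⟩ hleg
    by_cases hi0 : (i : ℕ) = 0
    · exfalso
      have h1 := hleg.1
      unfold posP at h1
      rw [if_pos hi0] at h1
      simp at h1
    rw [legalP_iff hm T a i hi0] at hleg
    obtain ⟨hw0, hcnt⟩ := hleg
    have hilt := i.isLt
    obtain ⟨hA, hB, hfree⟩ := core_lemma hm hT a (i : ℕ) (by omega) (by omega) hw0 hcnt
    refine ⟨(a, ⟨(i : ℕ), by omega⟩), ?_, ?_⟩
    · rw [legalG_iff hm T a ⟨(i : ℕ), by omega⟩ (by show 1 ≤ (i : ℕ); omega)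
        (by show (i : ℕ) ≤ m - 1; omega)]
      exact ⟨hw0, hcnt⟩
    · exact ⟨insert (a, (i : ℕ)) T, Sok_insert hT a (i : ℕ) hA hB hfree,
        move_posP hm hT a i hA hB hfree, move_posG hm hT a (i : ℕ) hA hB hfree⟩
  · rintro ⟨a, j⟩ hleg
    by_cases hj0 : (j : ℕ) = 0 ∨ (j : ℕ) = m
    · exfalso
      have h1 := hleg.1
      unfold posG at h1
      rw [if_pos hj0] at h1
      simp at h1
    push_neg at hj0
    have hjlt := j.isLt
    have hj1 : 1 ≤ (j : ℕ) := by omega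
    have hjm : (j : ℕ) ≤ m - 1 := by omega
    rw [legalG_iff hm T a j hj1 hjm] at hleg
    obtain ⟨hw0, hcnt⟩ := hleg
    obtain ⟨hA, hB, hfree⟩ := core_lemma hm hT a (j : ℕ) hj1 hjm hw0 hcnt
    refine ⟨(a, ⟨(j : ℕ), by omega⟩), ?_, ?_⟩
    · rw [legalP_iff hm T a ⟨(j : ℕ), by omega⟩ (by show (j : ℕ) ≠ 0; omega)]
      exact ⟨hw0, hcnt⟩
    · refine ⟨insert (a, (j : ℕ)) T, Sok_insert hT a (j : ℕ) hA hB hfree, ?_, ?_⟩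
      · exact move_posP hm hT a ⟨(j : ℕ), by omega⟩ hA hB hfree
      · exact move_posG hm hT a (j : ℕ) hA hB hfree

end Moves

end Toggle


namespace Toggle

section Iso

variable {V : Type*} [Fintype V] [DecidableEq V]
variable (G : SimpleGraph V) [DecidableRel G.Adj] (e : V ≃ V)

lemma closedNbhd_transport (he : ∀ x y, G.Adj (e x) (e y) ↔ G.Adj x y) (v u : V) :
    u ∈ closedNbhd G (e.symm v) ↔ e u ∈ closedNbhd G v := by
  rw [mem_closedNbhd, mem_closedNbhd]
  constructor
  · rintro (h | h)
    · left
      rw [h, Equiv.apply_symm_apply]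
    · right
      have := (he (e.symm v) u).mpr h
      rwa [Equiv.apply_symm_apply] at this
  · rintro (h | h)
    · left
      rw [← h, Equiv.symm_apply_apply]
    · right
      apply (he (e.symm v) u).mp
      rwa [Equiv.apply_symm_apply]

lemma closedNbhd_image (he : ∀ x y, G.Adj (e x) (e y) ↔ G.Adj x y) (v : V) :
    (closedNbhd G v).image e.symm = closedNbhd G (e.symm v) := by
  ext u
  rw [closedNbhd_transport G e he]
  simp only [Finset.mem_image]
  constructor
  · rintro ⟨w, hw, rfl⟩
    rwa [Equiv.apply_symm_apply]
  · intro h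
    exact ⟨e u, h, Equiv.symm_apply_apply e u⟩

lemma nbhdWeight_comp (he : ∀ x y, G.Adj (e x) (e y) ↔ G.Adj x y) (ω : V → Bool) (v : V) :
    nbhdWeight G (ω ∘ e.symm) v = nbhdWeight G ω (e.symm v) := by
  unfold nbhdWeight
  rw [← closedNbhd_image G e he, Finset.filter_image,
    Finset.card_image_of_injective _ e.symm.injective]
  rfl

lemma move_comp (he : ∀ x y, G.Adj (e x) (e y) ↔ G.Adj x y) (ω : V → Bool) (u : V) :
    move G (ω ∘ e.symm) u = (move G ω (e.symm u)) ∘ e.symm := by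
  funext w
  show (if w ∈ closedNbhd G u then !(ω (e.symm w)) else ω (e.symm w)) = _
  show _ = (if e.symm w ∈ closedNbhd G (e.symm u) then !(ω (e.symm w)) else ω (e.symm w))
  have h := closedNbhd_transport G e he u (e.symm w)
  rw [Equiv.apply_symm_apply] at h
  by_cases hw : w ∈ closedNbhd G u
  · rw [if_pos hw, if_pos (h.mpr hw)]
  · rw [if_neg hw, if_neg (fun hh => hw (h.mp hh))]

lemma isLegal_comp (he : ∀ x y, G.Adj (e x) (e y) ↔ G.Adj x y) (ω : V → Bool) (u : V) :
    IsLegal G (ω ∘ e.symm) u ↔ IsLegal G ω (e.symm u) := by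
  unfold IsLegal
  rw [nbhdWeight_comp G e he, move_comp G e he]
  have h : nbhdWeight G (move G ω (e.symm u) ∘ e.symm) u
      = nbhdWeight G (move G ω (e.symm u)) (e.symm u) := nbhdWeight_comp G e he _ u
  rw [h]
  rfl

lemma grundy_comp_symm (he : ∀ x y, G.Adj (e x) (e y) ↔ G.Adj x y) (ω : V → Bool) :
    grundy G (ω ∘ e.symm) = grundy G ω := by
  refine grundy_eq_of_rel G G (fun ψ ω' => ψ = ω' ∘ e.symm) ?_ _ _ rfl
  rintro ψ ω' rfl
  constructor
  · intro v hv
    refine ⟨e.symm v, (isLegal_comp G e he ω' v).mp hv, ?_⟩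
    exact move_comp G e he ω' v
  · intro w hw
    refine ⟨e w, ?_, ?_⟩
    · rw [isLegal_comp G e he, Equiv.symm_apply_apply]
      exact hw
    · rw [move_comp G e he, Equiv.symm_apply_apply]

end Iso

section Symmetry

variable {m : ℕ} [NeZero m]

lemma petersen_shift_adj (hm : 3 ≤ m) (c : Fin 2) (t : Fin m) (x y : Fin 2 × Fin m) :
    (petersen m 1).Adj (x.1 + c, x.2 + t) (y.1 + c, y.2 + t) ↔ (petersen m 1).Adj x y := by
  have hcol : ∀ u v : Fin m, u + t + 1 = v + t ↔ u + 1 = v := by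
    intro u v
    rw [add_right_comm]
    exact add_left_inj t
  have hrow2 : ∀ u v : Fin 2, v + c = u + c + 1 ↔ v = u + 1 := by
    intro u v
    rw [add_right_comm]
    exact add_left_inj c
  rw [petersen_adj hm, petersen_adj hm]
  simp only [ne_eq, Prod.ext_iff, add_left_inj, hcol, hrow2]

/-- the shifting automorphism of the prism. -/
def shiftEquiv (c : Fin 2) (t : Fin m) : (Fin 2 × Fin m) ≃ (Fin 2 × Fin m) :=
  Equiv.prodCongr (Equiv.addRight c) (Equiv.addRight t)

lemma shiftEquiv_he (hm : 3 ≤ m) (c : Fin 2) (t : Fin m) :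
    ∀ x y, (petersen m 1).Adj (shiftEquiv c t x) (shiftEquiv c t y) ↔ (petersen m 1).Adj x y :=
  fun x y => petersen_shift_adj hm c t x y

lemma P11_comp (c : Fin 2) (t : Fin m) : P11 m ∘ (shiftEquiv c t).symm = P11 m := rfl

lemma grundy_move_P11_eq (hm : 3 ≤ m) (v : Fin 2 × Fin m) :
    grundy (petersen m 1) (move (petersen m 1) (P11 m) v)
      = grundy (petersen m 1) (move (petersen m 1) (P11 m) (1, 0)) := by
  set e := shiftEquiv (v.1 - 1) v.2 with hedef
  have he := shiftEquiv_he hm (v.1 - 1) v.2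
  have hv : e (1, 0) = v := by
    show (1 + (v.1 - 1), 0 + v.2) = v
    rw [add_sub_cancel, zero_add]
  calc grundy (petersen m 1) (move (petersen m 1) (P11 m) v)
      = grundy (petersen m 1) (move (petersen m 1) (P11 m ∘ e.symm) (e (1, 0))) := by
        rw [P11_comp, hv]
    _ = grundy (petersen m 1) ((move (petersen m 1) (P11 m) (e.symm (e (1, 0)))) ∘ e.symm) := by
        rw [move_comp _ e he]
    _ = grundy (petersen m 1) (move (petersen m 1) (P11 m) (1, 0)) := by
        rw [Equiv.symm_apply_apply]
        exact grundy_comp_symm _ e he _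

lemma grundy_P11 (hm : 3 ≤ m) :
    grundy (petersen m 1) (P11 m)
      = mex {grundy (petersen m 1) (move (petersen m 1) (P11 m) (1, 0))} := by
  rw [grundy]
  congr 1
  ext n
  simp only [Finset.mem_image, Finset.mem_attach, true_and, Subtype.exists,
    Finset.mem_singleton]
  constructor
  · rintro ⟨v, hv, rfl⟩
    exact grundy_move_P11_eq hm v
  · intro h
    refine ⟨(1, 0), Finset.mem_filter.mpr ⟨Finset.mem_univ _, ?_⟩, ?_⟩
    · exact isLegal_allOnes (petersen m 1) (1, 0)
    · rw [h]

end Symmetry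

section BasePositions

variable {m : ℕ}

lemma Sok_empty : Sok m (∅ : Finset (Fin 2 × ℕ)) := by
  constructor
  · intro p hp
    simp at hp
  · intro p hp
    simp at hp

lemma mem1_empty (c : Fin 2) (k : ℕ) : mem1 (∅ : Finset (Fin 2 × ℕ)) c k = false := by
  apply mem1_false
  simp

lemma pv_empty (a : Fin 2) (i : ℕ) : pv m (∅ : Finset (Fin 2 × ℕ)) a i = Qv m a i := by
  rw [pv_expand, mem1_empty, mem1_empty, occ1_false (mem1_empty 0 i) (mem1_empty 1 i)]
  cases hq : Qv m a i <;> rfl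

lemma posP_empty [NeZero m] (hm : 3 ≤ m) :
    posP m ∅ = move (petersen m 1) (P11 m) (1, 0) := by
  funext p
  obtain ⟨b, j⟩ := p
  have hv1 : ((0 + 1 : Fin m) : ℕ) = 1 := by
    rw [val_add_one (by omega)]
    rw [if_neg]
    · rw [Fin.val_zero]
    · rw [Fin.val_zero]
      omega
  have hv2 : ((0 - 1 : Fin m) : ℕ) = m - 1 := by
    rw [val_sub_one (by omega), if_pos (Fin.val_zero m)]
  show posP m ∅ (b, j) = move (petersen m 1) (P11 m) (1, 0) (b, j)
  unfold move
  rw [petersen_closedNbhd hm]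
  unfold posP
  have hP11 : P11 m (b, j) = true := rfl
  by_cases hj0 : (j : ℕ) = 0
  · rw [if_pos hj0]
    have hj : j = 0 := Fin.ext (by rw [hj0, Fin.val_zero])
    subst hj
    have hmem : (b, (0 : Fin m)) ∈ ({((1 : Fin 2), (0 : Fin m)), (1, 0 + 1), (1, 0 - 1),
        (1 + 1, 0)} : Finset (Fin 2 × Fin m)) := by
      simp only [Finset.mem_insert, Finset.mem_singleton]
      rcases fin2_cases 1 b with hb | hb
      · left
        rw [hb]
      · right; right; right
        rw [hb, show (1 : Fin 2) + 1 = 0 from rfl]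
    rw [if_pos hmem, hP11]
    rfl
  · rw [if_neg hj0, pv_empty]
    by_cases hb1 : b = 1 ∧ ((j : ℕ) = 1 ∨ (j : ℕ) = m - 1)
    · rw [Qv_false hb1]
      have hmem : (b, j) ∈ ({((1 : Fin 2), (0 : Fin m)), (1, 0 + 1), (1, 0 - 1),
          (1 + 1, 0)} : Finset (Fin 2 × Fin m)) := by
        simp only [Finset.mem_insert, Finset.mem_singleton]
        obtain ⟨rfl, hj | hj⟩ := hb1
        · right; left
          rw [Fin.ext_iff.mpr (show (j : ℕ) = ((0 + 1 : Fin m) : ℕ) by rw [hv1]; exact hj)]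
        · right; right; left
          rw [Fin.ext_iff.mpr (show (j : ℕ) = ((0 - 1 : Fin m) : ℕ) by rw [hv2]; exact hj)]
      rw [if_pos hmem, hP11]
      rfl
    · rw [Qv_true hb1]
      have hnm : (b, j) ∉ ({((1 : Fin 2), (0 : Fin m)), (1, 0 + 1), (1, 0 - 1),
          (1 + 1, 0)} : Finset (Fin 2 × Fin m)) := by
        simp only [Finset.mem_insert, Finset.mem_singleton]
        rintro (h | h | h | h)
        · have := congrArg (fun p : Fin 2 × Fin m => ((p.2 : Fin m) : ℕ)) h
          simp only [Fin.val_zero] at this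
          exact hj0 this
        · refine hb1 ⟨congrArg Prod.fst h, Or.inl ?_⟩
          have := congrArg Fin.val (congrArg Prod.snd h)
          rwa [hv1] at this
        · refine hb1 ⟨congrArg Prod.fst h, Or.inr ?_⟩
          have := congrArg Fin.val (congrArg Prod.snd h)
          rwa [hv2] at this
        · have := congrArg (fun p : Fin 2 × Fin m => ((p.2 : Fin m) : ℕ)) h
          simp only [Fin.val_zero] at this
          exact hj0 this
      rw [if_neg hnm, hP11]

lemma posG_empty (hm : 3 ≤ m) : posG m ∅ = Hpos (m + 1) := by
  funext p
  obtain ⟨b, j⟩ := p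
  show posG m ∅ (b, j) = Hpos (m + 1) (b, j)
  unfold posG Hpos
  rw [if_neg (show ¬ m + 1 = 3 by omega)]
  have hjlt : (j : ℕ) < m + 1 := j.isLt
  have hb01 : b = 0 ∨ b = 1 := by
    rcases b with ⟨bv, hbv⟩
    interval_cases bv
    · exact Or.inl rfl
    · exact Or.inr rfl
  by_cases hj0 : (j : ℕ) = 0 ∨ (j : ℕ) = m
  · rw [if_pos hj0]
    have : ((b = 0 ∧ ((j : ℕ) = 0 ∨ (j : ℕ) = m + 1 - 1)) ∨
        (b = 1 ∧ ((j : ℕ) ≤ 1 ∨ m + 1 - 2 ≤ (j : ℕ)))) := by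
      rcases hb01 with rfl | rfl
      · left
        refine ⟨rfl, ?_⟩
        omega
      · right
        refine ⟨rfl, ?_⟩
        omega
    rw [decide_eq_true this]
    rfl
  · rw [if_neg hj0, pv_empty]
    push_neg at hj0
    by_cases hb1 : b = 1 ∧ ((j : ℕ) = 1 ∨ (j : ℕ) = m - 1)
    · rw [Qv_false hb1]
      have : ((b = 0 ∧ ((j : ℕ) = 0 ∨ (j : ℕ) = m + 1 - 1)) ∨
          (b = 1 ∧ ((j : ℕ) ≤ 1 ∨ m + 1 - 2 ≤ (j : ℕ)))) := by
        obtain ⟨rfl, hj⟩ := hb1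
        right
        exact ⟨rfl, by omega⟩
      rw [decide_eq_true this]
      rfl
    · rw [Qv_true hb1]
      have : ¬((b = 0 ∧ ((j : ℕ) = 0 ∨ (j : ℕ) = m + 1 - 1)) ∨
          (b = 1 ∧ ((j : ℕ) ≤ 1 ∨ m + 1 - 2 ≤ (j : ℕ)))) := by
        rintro (⟨rfl, hj⟩ | ⟨rfl, hj⟩)
        · omega
        · exact hb1 ⟨rfl, by omega⟩
      rw [decide_eq_false this]
      rfl

end BasePositions

end Toggle

/-- for `m ≥ 3`, the Nimber of the all-ones Toggle position on `P(m,1)`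
equals `mex {G(H_{m+1})}`; equivalently, it is `1` if `G(H_{m+1}) = 0` and `0`
otherwise. -/
theorem statement4 (m : ℕ) (hm : 3 ≤ m) :
    Toggle.grundy (Toggle.petersen m 1) (Toggle.P11 m)
        = Toggle.mex {Toggle.GH (m + 1)} ∧
    Toggle.grundy (Toggle.petersen m 1) (Toggle.P11 m)
        = (if Toggle.GH (m + 1) = 0 then 1 else 0) := by
  haveI : NeZero m := ⟨by omega⟩
  have key : Toggle.grundy (Toggle.petersen m 1) (Toggle.P11 m)
      = Toggle.mex {Toggle.GH (m + 1)} := by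
    rw [Toggle.grundy_P11 hm]
    congr 2
    rw [← Toggle.posP_empty hm, Toggle.grundy_posP_eq_posG hm ∅ Toggle.Sok_empty,
      Toggle.posG_empty hm]
    rfl
  refine ⟨key, ?_⟩
  rw [key, Toggle.mex_singleton]
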